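/- Let R be a set of k-subsets of Z_n in which every t-subset of Z_n lies in at most one member of R, and let T_1, …, T_r be pairwise disjoint Steiner systems S(t−1, k−1, n) on Z_n such that every t-subset of Z_n not contained in a member of R is contained in (a block of) exactly one T_i. Then the code over Z_2^n × Z_{r+1} whose codewords are the indicator words of the blocks of R (with symbol 0 in the last coordinate) together with, for each block {x_1,…,x_{k−1}} of T_i, the word with ones at x_1,…,x_{k−1} and symbol i in the last coordinate, is a mixed Steiner system MS(t, k, Z_2^n × Z_{r+1}): every weight-t word is covered exactly once and the minimum Hamming distance is 2(k−t)+1. -/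

import Mathlib

namespace Stmt11Aux
open scoped symmDiff

variable {n : ℕ}

/-- support of a ZMod 2 word -/
def msupp (x : Fin n → ZMod 2) : Finset (Fin n) := Finset.univ.filter (fun p => x p ≠ 0)

lemma hammingNorm_eq (x : Fin n → ZMod 2) : hammingNorm x = (msupp x).card := rfl

lemma msupp_ind (b : Finset (Fin n)) :
    msupp (fun p => if p ∈ b then 1 else 0) = b := by
  ext p
  simp [msupp]

lemma card_symmDiff' (s t : Finset (Fin n)) :
    (s ∆ t).card + 2 * (s ∩ t).card = s.card + t.card := by
  rw [symmDiff_def, Finset.sup_eq_union, Finset.card_union_of_disjoint disjoint_sdiff_sdiff]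
  have h1 := Finset.card_inter_add_card_sdiff s t
  have h2 := Finset.card_inter_add_card_sdiff t s
  rw [Finset.inter_comm] at h2
  omega

lemma hammingDist_formula (x y : Fin n → ZMod 2) :
    hammingDist x y + 2 * ((msupp x) ∩ (msupp y)).card = (msupp x).card + (msupp y).card := by
  have h : ({i | x i ≠ y i} : Finset (Fin n)) = (msupp x) ∆ (msupp y) := by
    ext p
    have key : ∀ a b : ZMod 2, (a ≠ b ↔ (a ≠ 0 ∧ ¬b ≠ 0) ∨ (b ≠ 0 ∧ ¬a ≠ 0)) := by decide
    simp only [Finset.mem_filter, Finset.mem_symmDiff, msupp, Finset.mem_univ, true_and]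
    exact key (x p) (y p)
  rw [hammingDist, h]
  exact card_symmDiff' _ _

lemma inter_card_eq_left {s t : Finset (Fin n)} : (s ∩ t).card = s.card ↔ s ⊆ t := by
  constructor
  · intro h
    have := Finset.eq_of_subset_of_card_le Finset.inter_subset_left h.ge
    rwa [Finset.inter_eq_left] at this
  · intro h; rw [Finset.inter_eq_left.mpr h]

end Stmt11Aux

open Stmt11Aux in
/-- Let `R` be a set of `k`-subsets of `Z_n` in which every `t`-subset lies in at most one
member, and let `T₁, …, T_r` be pairwise disjoint Steiner systems `S(t-1, k-1, n)` such
that every `t`-subset of `Z_n` is contained either in a member of `R`, or else in (a block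
of) exactly one `Tᵢ` (but not both). Then the code over `Z₂ⁿ × Z_{r+1}` whose codewords are
the indicators of the blocks of `R` (with symbol 0 in the last coordinate) together with,
for each block `b` of `Tᵢ`, the indicator of `b` with nonzero symbol `i` in the last
coordinate, is a mixed Steiner system `MS(t, k, Z₂ⁿ × Z_{r+1})`: all codewords have weight
`k`, every weight-`t` word is covered by exactly one codeword, and the minimum Hamming
distance is at least `2(k-t)+1`. -/
theorem stmt11 (n k t r : ℕ) (ht : 1 ≤ t) (htk : t ≤ k)
    (R : Finset (Finset (Fin n))) (hRk : ∀ b ∈ R, b.card = k)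
    (hRt : ∀ s : Finset (Fin n), s.card = t →
      ∀ b₁ ∈ R, ∀ b₂ ∈ R, s ⊆ b₁ → s ⊆ b₂ → b₁ = b₂)
    (T : Fin r → Finset (Finset (Fin n)))
    (hTk : ∀ i, ∀ b ∈ T i, b.card = k - 1)
    (hTS : ∀ i, ∀ s : Finset (Fin n), s.card = t - 1 → ∃! b, b ∈ T i ∧ s ⊆ b)
    (hTdisj : ∀ i j, i ≠ j → ∀ b, b ∈ T i → b ∉ T j)
    (hcov : ∀ s : Finset (Fin n), s.card = t → (¬ ∃ b ∈ R, s ⊆ b) →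
      ∃! i, ∃ b ∈ T i, s ⊆ b)
    (hcov' : ∀ s : Finset (Fin n), s.card = t → (∃ b ∈ R, s ⊆ b) →
      ∀ i, ∀ b ∈ T i, ¬ s ⊆ b) :
    ∀ C : Set ((Fin n → ZMod 2) × ZMod (r + 1)),
      C = { w | (∃ b ∈ R, w = (fun p => if p ∈ b then 1 else 0, 0)) ∨
            (∃ i : Fin r, ∃ b ∈ T i,
              w = (fun p => if p ∈ b then 1 else 0, ((i : ℕ) + 1 : ZMod (r + 1)))) } →
      (∀ c ∈ C, hammingNorm c.1 + (if c.2 = 0 then 0 else 1) = k) ∧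
      (∀ x : (Fin n → ZMod 2) × ZMod (r + 1),
        hammingNorm x.1 + (if x.2 = 0 then 0 else 1) = t →
        ∃! c, c ∈ C ∧ hammingDist x.1 c.1 + (if x.2 = c.2 then 0 else 1) = k - t) ∧
      (∀ c₁ ∈ C, ∀ c₂ ∈ C, c₁ ≠ c₂ →
        2 * (k - t) + 1 ≤ hammingDist c₁.1 c₂.1 + (if c₁.2 = c₂.2 then 0 else 1)) := by
  intro C hC
  subst hC
  have hk1 : 1 ≤ k := le_trans ht htk
  -- nonzero symbols
  have hne : ∀ i : Fin r, ((i : ℕ) + 1 : ZMod (r + 1)) ≠ 0 := by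
    intro i h
    have hi := i.isLt
    rw [show ((i : ℕ) + 1 : ZMod (r + 1)) = (((i : ℕ) + 1 : ℕ) : ZMod (r + 1)) by push_cast; ring,
        ZMod.natCast_eq_zero_iff] at h
    have := Nat.le_of_dvd (Nat.succ_pos _) h
    omega
  have hinj : ∀ i j : Fin r,
      ((i : ℕ) + 1 : ZMod (r + 1)) = ((j : ℕ) + 1 : ZMod (r + 1)) → i = j := by
    intro i j h
    have hi := i.isLt; have hj := j.isLt
    have h' : (((i : ℕ) + 1 : ℕ) : ZMod (r + 1)) = (((j : ℕ) + 1 : ℕ) : ZMod (r + 1)) := by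
      push_cast; exact h
    have hv := congrArg ZMod.val h'
    rw [ZMod.val_natCast, ZMod.val_natCast, Nat.mod_eq_of_lt (by omega),
        Nat.mod_eq_of_lt (by omega)] at hv
    exact Fin.ext (by omega)
  have indinj : ∀ b₁ b₂ : Finset (Fin n),
      (fun p => if p ∈ b₁ then (1 : ZMod 2) else 0) = (fun p => if p ∈ b₂ then 1 else 0) →
      b₁ = b₂ := by
    intro b₁ b₂ h
    have := congrArg msupp h
    rwa [msupp_ind, msupp_ind] at this
  have dist_ind : ∀ (x : Fin n → ZMod 2) (b : Finset (Fin n)),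
      hammingDist x (fun p => if p ∈ b then 1 else 0) + 2 * ((msupp x) ∩ b).card
        = (msupp x).card + b.card := by
    intro x b
    have := hammingDist_formula x (fun p => if p ∈ b then 1 else 0)
    rwa [msupp_ind] at this
  have Tuniq : ∀ i : Fin r, ∀ s : Finset (Fin n), t - 1 ≤ s.card →
      ∀ b₁ ∈ T i, ∀ b₂ ∈ T i, s ⊆ b₁ → s ⊆ b₂ → b₁ = b₂ := by
    intro i s hs b₁ hb₁ b₂ hb₂ h₁ h₂
    obtain ⟨s', hsub, hcard⟩ := Finset.exists_subset_card_eq hs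
    obtain ⟨b, -, hb⟩ := hTS i s' hcard
    rw [hb b₁ ⟨hb₁, hsub.trans h₁⟩, hb b₂ ⟨hb₂, hsub.trans h₂⟩]
  refine ⟨?_, ?_, ?_⟩
  -- Part 1 : weights
  · rintro c (⟨b, hb, rfl⟩ | ⟨i, b, hb, rfl⟩)
    · simp [hammingNorm_eq, msupp_ind, hRk b hb]
    · rw [hammingNorm_eq]; simp only [msupp_ind]
      rw [if_neg (hne i), hTk i b hb]
      omega
  -- Part 2 : perfect covering of weight-t words
  · intro x hx
    by_cases hx2 : x.2 = 0
    · -- support of x.1 has card t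
      have hst : (msupp x.1).card = t := by
        rw [hammingNorm_eq, if_pos hx2] at hx; omega
      by_cases hR : ∃ b ∈ R, msupp x.1 ⊆ b
      · obtain ⟨b₀, hb₀, hsub₀⟩ := hR
        refine ⟨(fun p => if p ∈ b₀ then 1 else 0, 0), ⟨Or.inl ⟨b₀, hb₀, rfl⟩, ?_⟩, ?_⟩
        · dsimp only
          have hd := dist_ind x.1 b₀
          have hI : ((msupp x.1) ∩ b₀).card = (msupp x.1).card :=
            inter_card_eq_left.mpr hsub₀
          rw [if_pos hx2]
          have hbk := hRk b₀ hb₀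
          omega
        · rintro c ⟨(⟨b, hb, rfl⟩ | ⟨i, b, hb, rfl⟩), hdist⟩
          all_goals dsimp only at hdist
          · have hd := dist_ind x.1 b
            have hbk := hRk b hb
            rw [if_pos hx2] at hdist
            have hIle : ((msupp x.1) ∩ b).card ≤ (msupp x.1).card :=
              Finset.card_le_card Finset.inter_subset_left
            have hI : ((msupp x.1) ∩ b).card = (msupp x.1).card := by omega
            have hsub : msupp x.1 ⊆ b := inter_card_eq_left.mp hI
            have : b = b₀ := hRt (msupp x.1) hst b hb b₀ hb₀ hsub hsub₀
            rw [this]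
          · exfalso
            have hd := dist_ind x.1 b
            have hbk := hTk i b hb
            rw [if_neg (fun h => hne i (hx2 ▸ h).symm)] at hdist
            have hIle : ((msupp x.1) ∩ b).card ≤ ((msupp x.1)).card :=
              Finset.card_le_card Finset.inter_subset_left
            have hIle' : ((msupp x.1) ∩ b).card ≤ b.card :=
              Finset.card_le_card Finset.inter_subset_right
            have hI : ((msupp x.1) ∩ b).card = (msupp x.1).card := by omega
            exact hcov' (msupp x.1) hst ⟨b₀, hb₀, hsub₀⟩ i b hb (inter_card_eq_left.mp hI)
      · obtain ⟨i₀, ⟨b₀, hb₀, hsub₀⟩, hiu⟩ := hcov (msupp x.1) hst hR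
        refine ⟨(fun p => if p ∈ b₀ then 1 else 0, ((i₀ : ℕ) + 1 : ZMod (r + 1))),
          ⟨Or.inr ⟨i₀, b₀, hb₀, rfl⟩, ?_⟩, ?_⟩
        · dsimp only
          have hd := dist_ind x.1 b₀
          have hI : ((msupp x.1) ∩ b₀).card = (msupp x.1).card :=
            inter_card_eq_left.mpr hsub₀
          have hbk := hTk i₀ b₀ hb₀
          have hle := Finset.card_le_card hsub₀
          rw [if_neg (fun h => hne i₀ (hx2 ▸ h).symm)]
          omega
        · rintro c ⟨(⟨b, hb, rfl⟩ | ⟨i, b, hb, rfl⟩), hdist⟩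
          all_goals dsimp only at hdist
          · exfalso
            have hd := dist_ind x.1 b
            have hbk := hRk b hb
            rw [if_pos hx2] at hdist
            have hIle : ((msupp x.1) ∩ b).card ≤ (msupp x.1).card :=
              Finset.card_le_card Finset.inter_subset_left
            have hI : ((msupp x.1) ∩ b).card = (msupp x.1).card := by omega
            exact hR ⟨b, hb, inter_card_eq_left.mp hI⟩
          · have hd := dist_ind x.1 b
            have hbk := hTk i b hb
            rw [if_neg (fun h => hne i (hx2 ▸ h).symm)] at hdist
            have hIle : ((msupp x.1) ∩ b).card ≤ (msupp x.1).card :=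
              Finset.card_le_card Finset.inter_subset_left
            have hIle' : ((msupp x.1) ∩ b).card ≤ b.card :=
              Finset.card_le_card Finset.inter_subset_right
            have hI : ((msupp x.1) ∩ b).card = (msupp x.1).card := by omega
            have hsub : msupp x.1 ⊆ b := inter_card_eq_left.mp hI
            have hii : i = i₀ := hiu i ⟨b, hb, hsub⟩
            subst hii
            have : b = b₀ := Tuniq i (msupp x.1) (by omega) b hb b₀ hb₀ hsub hsub₀
            rw [this]
    · -- x.2 ≠ 0 : support has card t - 1
      have hst : (msupp x.1).card = t - 1 := by
        rw [hammingNorm_eq, if_neg hx2] at hx; omega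
      have hv0 : x.2.val ≠ 0 := fun h => hx2 ((ZMod.val_eq_zero x.2).mp h)
      have hvlt : x.2.val < r + 1 := ZMod.val_lt x.2
      set i₀ : Fin r := ⟨x.2.val - 1, by omega⟩ with hi₀
      have hx2i : x.2 = ((i₀ : ℕ) + 1 : ZMod (r + 1)) := by
        have h1 : ((i₀ : ℕ) + 1 : ℕ) = x.2.val := by simp [hi₀]; omega
        have := ZMod.natCast_rightInverse (n := r + 1) x.2
        rw [← this, ← h1]; push_cast; ring
      obtain ⟨b₀, ⟨hb₀, hsub₀⟩, hbu⟩ := hTS i₀ (msupp x.1) hst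
      refine ⟨(fun p => if p ∈ b₀ then 1 else 0, ((i₀ : ℕ) + 1 : ZMod (r + 1))),
        ⟨Or.inr ⟨i₀, b₀, hb₀, rfl⟩, ?_⟩, ?_⟩
      · dsimp only
        have hd := dist_ind x.1 b₀
        have hI : ((msupp x.1) ∩ b₀).card = (msupp x.1).card :=
          inter_card_eq_left.mpr hsub₀
        have hbk := hTk i₀ b₀ hb₀
        have hle := Finset.card_le_card hsub₀
        rw [if_pos hx2i]
        omega
      · rintro c ⟨(⟨b, hb, rfl⟩ | ⟨i, b, hb, rfl⟩), hdist⟩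
        all_goals dsimp only at hdist
        · exfalso
          have hd := dist_ind x.1 b
          have hbk := hRk b hb
          rw [if_neg hx2] at hdist
          have hIle : ((msupp x.1) ∩ b).card ≤ (msupp x.1).card :=
            Finset.card_le_card Finset.inter_subset_left
          omega
        · have hd := dist_ind x.1 b
          have hbk := hTk i b hb
          have hIle : ((msupp x.1) ∩ b).card ≤ (msupp x.1).card :=
            Finset.card_le_card Finset.inter_subset_left
          by_cases hsym : x.2 = ((i : ℕ) + 1 : ZMod (r + 1))
          · rw [if_pos hsym] at hdist
            have hI : ((msupp x.1) ∩ b).card = (msupp x.1).card := by omega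
            have hii : i = i₀ := hinj i i₀ (hsym ▸ hx2i)
            subst hii
            have : b = b₀ := hbu b ⟨hb, inter_card_eq_left.mp hI⟩
            rw [this]
          · exfalso
            rw [if_neg hsym] at hdist
            omega
  -- Part 3 : minimum distance
  · rintro c₁ (⟨b₁, hb₁, rfl⟩ | ⟨i, b₁, hb₁, rfl⟩) c₂ (⟨b₂, hb₂, rfl⟩ | ⟨j, b₂, hb₂, rfl⟩) hne12
    · -- R , R
      have hbne : b₁ ≠ b₂ := fun h => hne12 (by rw [h])
      have hd := dist_ind (fun p => if p ∈ b₁ then 1 else 0) b₂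
      rw [msupp_ind] at hd
      dsimp only
      have hk₁ := hRk b₁ hb₁; have hk₂ := hRk b₂ hb₂
      have hI : ¬ t ≤ (b₁ ∩ b₂).card := by
        intro hle
        obtain ⟨u, hu, hucard⟩ := Finset.exists_subset_card_eq hle
        exact hbne (hRt u hucard b₁ hb₁ b₂ hb₂
          (hu.trans Finset.inter_subset_left) (hu.trans Finset.inter_subset_right))
      rw [if_pos rfl]
      omega
    · -- R , T
      have hd := dist_ind (fun p => if p ∈ b₁ then 1 else 0) b₂
      rw [msupp_ind] at hd
      dsimp only
      have hk₁ := hRk b₁ hb₁; have hk₂ := hTk j b₂ hb₂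
      have hI : ¬ t ≤ (b₁ ∩ b₂).card := by
        intro hle
        obtain ⟨u, hu, hucard⟩ := Finset.exists_subset_card_eq hle
        exact hcov' u hucard ⟨b₁, hb₁, hu.trans Finset.inter_subset_left⟩ j b₂ hb₂
          (hu.trans Finset.inter_subset_right)
      rw [if_neg (fun h => hne j h.symm)]
      omega
    · -- T , R
      have hd := dist_ind (fun p => if p ∈ b₁ then 1 else 0) b₂
      rw [msupp_ind] at hd
      dsimp only
      have hk₁ := hTk i b₁ hb₁; have hk₂ := hRk b₂ hb₂
      have hI : ¬ t ≤ (b₁ ∩ b₂).card := by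
        intro hle
        obtain ⟨u, hu, hucard⟩ := Finset.exists_subset_card_eq hle
        exact hcov' u hucard ⟨b₂, hb₂, hu.trans Finset.inter_subset_right⟩ i b₁ hb₁
          (hu.trans Finset.inter_subset_left)
      rw [if_neg (hne i)]
      omega
    · -- T , T
      have hd := dist_ind (fun p => if p ∈ b₁ then 1 else 0) b₂
      rw [msupp_ind] at hd
      dsimp only
      have hk₁ := hTk i b₁ hb₁; have hk₂ := hTk j b₂ hb₂
      by_cases hij : i = j
      · subst hij
        have hbne : b₁ ≠ b₂ := fun h => hne12 (by rw [h])
        have hI : ¬ t - 1 ≤ (b₁ ∩ b₂).card := by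
          intro hle
          obtain ⟨u, hu, hucard⟩ := Finset.exists_subset_card_eq hle
          exact hbne (Tuniq i u (le_of_eq hucard.symm) b₁ hb₁ b₂ hb₂
            (hu.trans Finset.inter_subset_left) (hu.trans Finset.inter_subset_right))
        rw [if_pos rfl]
        omega
      · have hI : ¬ t ≤ (b₁ ∩ b₂).card := by
          intro hle
          obtain ⟨u, hu, hucard⟩ := Finset.exists_subset_card_eq hle
          by_cases hR : ∃ b ∈ R, u ⊆ b
          · exact hcov' u hucard hR i b₁ hb₁ (hu.trans Finset.inter_subset_left)
          · obtain ⟨i', -, hiu⟩ := hcov u hucard hR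
            exact hij ((hiu i ⟨b₁, hb₁, hu.trans Finset.inter_subset_left⟩).trans
              (hiu j ⟨b₂, hb₂, hu.trans Finset.inter_subset_right⟩).symm)
        rw [if_neg (fun h => hij (hinj i j h))]
        omega
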